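/- arXiv:1406.6824 — 2 statements merged into one kernel-verified Lean document; each statement's English description precedes it below -/
import Mathlib

section
/- For N ≥ 2, the function ρ_N satisfies: (i) ρ_N(r) → +∞ as r → 0⁺; (ii) ρ_N(r) → +∞ as r → +∞; (iii) if N ≥ 3, then r ρ_N(r) → N−2 as r → 0⁺; (iv) if N = 2, then r log(1/r) ρ_2(r) → 1 as r → 0⁺. -/
open MeasureTheory Filter

/-- `ρ_N(r) = r^{1−N} e^{−r²/2} / ∫_r^{+∞} t^{1−N} e^{−t²/2} dt`. -/
noncomputable def rho (N : ℕ) (r : ℝ) : ℝ :=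
  (r ^ (1 - (N : ℝ)) * Real.exp (-r ^ 2 / 2)) /
    ∫ t in Set.Ioi r, t ^ (1 - (N : ℝ)) * Real.exp (-t ^ 2 / 2)

namespace RhoAux

open Set

noncomputable def F (a r : ℝ) : ℝ := ∫ t in Set.Ioi r, t ^ a * Real.exp (-t ^ 2 / 2)

lemma integrable_exp : Integrable (fun t : ℝ => Real.exp (-t ^ 2 / 2)) := by
  have h : (fun t : ℝ => Real.exp (-t ^ 2 / 2))
      = fun t : ℝ => Real.exp (-(1/2 : ℝ) * t ^ 2) := by
    funext t; ring_nf
  rw [h]; exact integrable_exp_neg_mul_sq (by norm_num)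

lemma integrable_id_mul_exp : Integrable (fun t : ℝ => t * Real.exp (-t ^ 2 / 2)) := by
  have h : (fun t : ℝ => t * Real.exp (-t ^ 2 / 2))
      = fun t : ℝ => t * Real.exp (-(1/2 : ℝ) * t ^ 2) := by
    funext t; ring_nf
  rw [h]; exact integrable_mul_exp_neg_mul_sq (by norm_num)

lemma cont_exp : Continuous (fun t : ℝ => Real.exp (-t ^ 2 / 2)) := by fun_prop

lemma integrableOn_F {a r : ℝ} (ha : a ≤ 0) (hr : 0 < r) :
    IntegrableOn (fun t : ℝ => t ^ a * Real.exp (-t ^ 2 / 2)) (Set.Ioi r) := by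
  have hc : ContinuousOn (fun t : ℝ => t ^ a * Real.exp (-t ^ 2 / 2)) (Set.Ioi r) :=
    fun t ht =>
      ((Real.continuousAt_rpow_const t a (Or.inl (ne_of_gt (hr.trans ht)))).mul
        cont_exp.continuousAt).continuousWithinAt
  apply Integrable.mono' ((integrable_exp.const_mul (r ^ a)).integrableOn)
    (hc.aestronglyMeasurable measurableSet_Ioi)
  filter_upwards [ae_restrict_mem measurableSet_Ioi] with t ht
  have ht0 : 0 < t := hr.trans ht
  rw [Real.norm_eq_abs, abs_mul, abs_of_nonneg (Real.rpow_nonneg ht0.le a),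
    abs_of_nonneg (Real.exp_pos _).le]
  exact mul_le_mul_of_nonneg_right (Real.rpow_le_rpow_of_nonpos hr (le_of_lt ht) ha)
    (Real.exp_pos _).le

lemma tendsto_exp_sq : Tendsto (fun t : ℝ => Real.exp (-t ^ 2 / 2)) atTop (nhds 0) := by
  apply Real.tendsto_exp_atBot.comp
  have h : Tendsto (fun t : ℝ => t ^ 2) atTop atTop := tendsto_pow_atTop two_ne_zero
  have h2 : Tendsto (fun t : ℝ => -t ^ 2) atTop atBot := by
    simpa [Function.comp_def] using tendsto_neg_atTop_atBot.comp h
  exact h2.atBot_div_const (by norm_num : (0:ℝ) < 2)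

lemma integral_id_mul_exp (r : ℝ) :
    ∫ t in Set.Ioi r, t * Real.exp (-t ^ 2 / 2) = Real.exp (-r ^ 2 / 2) := by
  have hd : ∀ x ∈ Set.Ici r, HasDerivAt (fun t : ℝ => -Real.exp (-t ^ 2 / 2))
      (x * Real.exp (-x ^ 2 / 2)) x := by
    intro x _
    have h1 : HasDerivAt (fun t : ℝ => -t ^ 2 / 2) (-x) x := by
      have := ((hasDerivAt_pow 2 x).neg).div_const 2
      refine this.congr_deriv ?_
      simp; ring
    have h2 := h1.exp
    refine h2.neg.congr_deriv ?_
    ring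
  have hlim : Tendsto (fun t : ℝ => -Real.exp (-t ^ 2 / 2)) atTop (nhds 0) := by
    simpa using tendsto_exp_sq.neg
  have key := MeasureTheory.integral_Ioi_of_hasDerivAt_of_tendsto' hd
    integrable_id_mul_exp.integrableOn hlim
  rw [key]; ring

lemma identity {c r : ℝ} (hc : c ≤ -1) (hr : 0 < r) :
    (-c) * F (c - 1) r + F (c + 1) r = r ^ c * Real.exp (-r ^ 2 / 2) := by
  set f' : ℝ → ℝ := fun x =>
    (-c) * (x ^ (c - 1) * Real.exp (-x ^ 2 / 2)) + x ^ (c + 1) * Real.exp (-x ^ 2 / 2) with hf'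
  have hd : ∀ x ∈ Set.Ici r, HasDerivAt (fun t : ℝ => -(t ^ c * Real.exp (-t ^ 2 / 2)))
      (f' x) x := by
    intro x hx
    have hx0 : 0 < x := lt_of_lt_of_le hr hx
    have h1 : HasDerivAt (fun t : ℝ => t ^ c) (c * x ^ (c - 1)) x :=
      Real.hasDerivAt_rpow_const (Or.inl hx0.ne')
    have h2 : HasDerivAt (fun t : ℝ => -t ^ 2 / 2) (-x) x := by
      have := ((hasDerivAt_pow 2 x).neg).div_const 2
      refine this.congr_deriv ?_
      simp; ring
    have h3 := (h1.mul h2.exp).neg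
    refine h3.congr_deriv ?_
    simp only [hf']
    have hxc : x ^ (c + 1) = x ^ c * x := Real.rpow_add_one hx0.ne' c
    rw [hxc]; ring
  have hint : IntegrableOn f' (Set.Ioi r) := by
    apply Integrable.add
    · exact (integrableOn_F (by linarith) hr).const_mul _
    · exact integrableOn_F (by linarith) hr
  have hlim : Tendsto (fun t : ℝ => -(t ^ c * Real.exp (-t ^ 2 / 2))) atTop (nhds 0) := by
    apply squeeze_zero_norm' _ tendsto_exp_sq
    filter_upwards [eventually_ge_atTop (1:ℝ)] with t ht
    have ht0 : 0 < t := lt_of_lt_of_le one_pos ht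
    rw [norm_neg, norm_mul, Real.norm_eq_abs, Real.norm_eq_abs,
      abs_of_nonneg (Real.rpow_nonneg ht0.le c), abs_of_nonneg (Real.exp_pos _).le]
    have : t ^ c ≤ 1 := Real.rpow_le_one_of_one_le_of_nonpos ht (by linarith)
    nlinarith [Real.exp_pos (-t ^ 2 / 2)]
  have key := MeasureTheory.integral_Ioi_of_hasDerivAt_of_tendsto' hd hint hlim
  have hsplit : ∫ x in Set.Ioi r, f' x
      = (-c) * F (c - 1) r + F (c + 1) r := by
    rw [hf']
    rw [MeasureTheory.integral_add ((integrableOn_F (by linarith) hr).const_mul _)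
      (integrableOn_F (by linarith) hr), MeasureTheory.integral_const_mul]
    rfl
  rw [hsplit] at key
  rw [key]; ring

lemma F_pos {a r : ℝ} (ha : a ≤ 0) (hr : 0 < r) : 0 < F a r := by
  rw [F]
  rw [MeasureTheory.setIntegral_pos_iff_support_of_nonneg_ae ?_ (integrableOn_F ha hr)]
  · have hsub : Set.Ioi r ⊆ Function.support fun t : ℝ => t ^ a * Real.exp (-t ^ 2 / 2) := by
      intro t ht
      have ht0 : 0 < t := hr.trans ht
      exact ne_of_gt (mul_pos (Real.rpow_pos_of_pos ht0 a) (Real.exp_pos _))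
    rw [Set.inter_eq_right.mpr hsub, Real.volume_Ioi]
    simp
  · filter_upwards [ae_restrict_mem measurableSet_Ioi] with t ht
    have ht0 : 0 < t := hr.trans ht
    positivity

lemma F_le {a r : ℝ} (ha : a ≤ 0) (hr : 0 < r) :
    F a r ≤ r ^ a * ∫ t in Set.Ioi (0:ℝ), Real.exp (-t ^ 2 / 2) := by
  have h1 : F a r ≤ ∫ t in Set.Ioi r, r ^ a * Real.exp (-t ^ 2 / 2) := by
    apply MeasureTheory.setIntegral_mono_on (integrableOn_F ha hr)
      ((integrable_exp.const_mul _).integrableOn) measurableSet_Ioi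
    intro t ht
    exact mul_le_mul_of_nonneg_right
      (Real.rpow_le_rpow_of_nonpos hr (le_of_lt ht) ha) (Real.exp_pos _).le
  refine h1.trans ?_
  rw [MeasureTheory.integral_const_mul]
  apply mul_le_mul_of_nonneg_left _ (Real.rpow_nonneg hr.le a)
  apply MeasureTheory.setIntegral_mono_set integrable_exp.integrableOn
  · filter_upwards with t using (Real.exp_pos _).le
  · exact HasSubset.Subset.eventuallyLE (Set.Ioi_subset_Ioi hr.le)

end RhoAux

namespace RhoAux

lemma rho_def (N : ℕ) (r : ℝ) :
    rho N r = (r ^ (1 - (N : ℝ)) * Real.exp (-r ^ 2 / 2)) / F (1 - (N : ℝ)) r := rfl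

lemma rho_ge_self {N : ℕ} (hN : 2 ≤ N) {r : ℝ} (hr : 0 < r) : r ≤ rho N r := by
  have hNr : (2:ℝ) ≤ (N:ℝ) := by exact_mod_cast hN
  have ha : (1:ℝ) - N ≤ 0 := by linarith
  have hIle : F (1 - (N:ℝ)) r ≤ r ^ (-(N:ℝ)) * Real.exp (-r ^ 2 / 2) := by
    have h1 : F (1 - (N:ℝ)) r
        ≤ ∫ t in Set.Ioi r, r ^ (-(N:ℝ)) * (t * Real.exp (-t ^ 2 / 2)) := by
      apply MeasureTheory.setIntegral_mono_on (integrableOn_F ha hr)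
        ((integrable_id_mul_exp.const_mul _).integrableOn) measurableSet_Ioi
      intro t ht
      have ht0 : 0 < t := hr.trans ht
      have hsplit : t ^ ((1:ℝ) - N) = t * t ^ (-(N:ℝ)) := by
        rw [show (1:ℝ) - N = 1 + -(N:ℝ) by ring, Real.rpow_add ht0, Real.rpow_one]
      have h2 : t ^ (-(N:ℝ)) ≤ r ^ (-(N:ℝ)) :=
        Real.rpow_le_rpow_of_nonpos hr (le_of_lt ht) (neg_nonpos.mpr (Nat.cast_nonneg N))
      calc t ^ ((1:ℝ) - N) * Real.exp (-t ^ 2 / 2)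
          = t ^ (-(N:ℝ)) * (t * Real.exp (-t ^ 2 / 2)) := by rw [hsplit]; ring
        _ ≤ r ^ (-(N:ℝ)) * (t * Real.exp (-t ^ 2 / 2)) := by
            apply mul_le_mul_of_nonneg_right h2
            positivity
    rwa [MeasureTheory.integral_const_mul, integral_id_mul_exp] at h1
  rw [rho_def, le_div_iff₀ (F_pos ha hr)]
  calc r ^ ((1:ℝ) - N) * Real.exp (-r ^ 2 / 2)
      = r * (r ^ (-(N:ℝ)) * Real.exp (-r ^ 2 / 2)) := by
        rw [show (1:ℝ) - N = 1 + -(N:ℝ) by ring, Real.rpow_add hr, Real.rpow_one]; ring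
    _ ≥ r * F (1 - (N:ℝ)) r := mul_le_mul_of_nonneg_left hIle hr.le

lemma part2 {N : ℕ} (hN : 2 ≤ N) : Tendsto (rho N) atTop atTop := by
  apply tendsto_atTop_mono' atTop _ tendsto_id
  filter_upwards [eventually_gt_atTop (0:ℝ)] with r hr
  exact rho_ge_self hN hr

lemma part3 {N : ℕ} (hN : 3 ≤ N) :
    Tendsto (fun r => r * rho N r) (nhdsWithin 0 (Set.Ioi 0)) (nhds ((N : ℝ) - 2)) := by
  have hNr : (3:ℝ) ≤ (N:ℝ) := by exact_mod_cast hN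
  set C : ℝ := ∫ t in Set.Ioi (0:ℝ), Real.exp (-t ^ 2 / 2) with hC
  set q : ℝ → ℝ := fun r =>
    F (3 - (N:ℝ)) r / (r ^ ((2:ℝ) - N) * Real.exp (-r ^ 2 / 2)) with hqdef
  have hCpos : 0 ≤ C := by
    rw [hC]; positivity
  have hq : Tendsto q (nhdsWithin 0 (Set.Ioi 0)) (nhds 0) := by
    apply squeeze_zero' (g := fun r => C * (Real.exp (r ^ 2 / 2) * r))
    · filter_upwards [self_mem_nhdsWithin] with r hr
      have hr0 : (0:ℝ) < r := hr
      apply div_nonneg (F_pos (by linarith) hr0).le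
      positivity
    · filter_upwards [self_mem_nhdsWithin] with r hr
      have hr0 : (0:ℝ) < r := hr
      have hX : 0 < r ^ ((2:ℝ) - N) * Real.exp (-r ^ 2 / 2) := by positivity
      rw [hqdef]
      simp only []
      rw [div_le_iff₀ hX]
      have hb := F_le (a := 3 - (N:ℝ)) (by linarith) hr0
      refine hb.trans (le_of_eq ?_)
      rw [← hC]
      rw [show (3:ℝ) - N = 1 + ((2:ℝ) - N) by ring, Real.rpow_add hr0, Real.rpow_one]
      have hexp : Real.exp (-r ^ 2 / 2) = (Real.exp (r ^ 2 / 2))⁻¹ := by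
        rw [← Real.exp_neg]; ring_nf
      rw [hexp]
      have he := (Real.exp_pos (r ^ 2 / 2)).ne'
      field_simp
    · have hg : Continuous (fun r : ℝ => C * (Real.exp (r ^ 2 / 2) * r)) := by fun_prop
      have := hg.tendsto' 0 0 (by simp)
      exact this.mono_left nhdsWithin_le_nhds
  have h1 : Tendsto (fun r => ((N:ℝ) - 2) / (1 - q r)) (nhdsWithin 0 (Set.Ioi 0))
      (nhds ((N:ℝ) - 2)) := by
    have hone : Tendsto (fun r => 1 - q r) (nhdsWithin 0 (Set.Ioi 0)) (nhds 1) := by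
      simpa using tendsto_const_nhds.sub hq
    have := Filter.Tendsto.div (tendsto_const_nhds (x := ((N:ℝ) - 2))) hone one_ne_zero
    rw [div_one] at this; exact this
  apply h1.congr'
  filter_upwards [self_mem_nhdsWithin] with r hr
  have hr0 : (0:ℝ) < r := hr
  have hI : 0 < F (1 - (N:ℝ)) r := F_pos (by linarith) hr0
  have hJ : 0 < F (3 - (N:ℝ)) r := F_pos (by linarith) hr0
  have hX : 0 < r ^ ((2:ℝ) - N) * Real.exp (-r ^ 2 / 2) := by positivity
  have hid := identity (c := (2:ℝ) - N) (by linarith) hr0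
  rw [show (2:ℝ) - N - 1 = 1 - (N:ℝ) by ring, show (2:ℝ) - N + 1 = 3 - (N:ℝ) by ring,
    show -((2:ℝ) - N) = (N:ℝ) - 2 by ring] at hid
  have hrX : r ^ ((2:ℝ) - N) = r * r ^ ((1:ℝ) - N) := by
    rw [show (2:ℝ) - N = 1 + ((1:ℝ) - N) by ring, Real.rpow_add hr0, Real.rpow_one]
  have hqr : q r = F (3 - (N:ℝ)) r / (r ^ ((2:ℝ) - N) * Real.exp (-r ^ 2 / 2)) := rfl
  rw [hqr, rho_def]
  have hN2 : ((N:ℝ) - 2) ≠ 0 := by linarith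
  have hgoal : r * (r ^ ((1:ℝ) - N) * Real.exp (-r ^ 2 / 2) / F (1 - (N:ℝ)) r)
      = (r ^ ((2:ℝ) - N) * Real.exp (-r ^ 2 / 2)) / F (1 - (N:ℝ)) r := by
    rw [hrX]; ring
  rw [hgoal, one_sub_div hX.ne',
    show r ^ ((2:ℝ) - N) * Real.exp (-r ^ 2 / 2) - F (3 - (N:ℝ)) r
      = ((N:ℝ) - 2) * F (1 - (N:ℝ)) r by linarith,
    div_div_eq_mul_div, mul_div_mul_left _ _ hN2]

lemma F_split {r : ℝ} (hr : 0 < r) (hr1 : r < 1) :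
    F (-1) r = (∫ t in Set.Ioc r 1, t ^ (-1:ℝ) * Real.exp (-t ^ 2 / 2)) + F (-1) 1 := by
  rw [F, F, ← Set.Ioc_union_Ioi_eq_Ioi hr1.le,
    MeasureTheory.setIntegral_union ?_ measurableSet_Ioi
      ((integrableOn_F (by norm_num) hr).mono_set Set.Ioc_subset_Ioi_self)
      (integrableOn_F (by norm_num) one_pos)]
  rw [Set.disjoint_left]
  rintro x ⟨_, hx1⟩ hx2
  exact absurd hx2 (not_lt.mpr hx1)

lemma F_log_bound {r : ℝ} (hr : 0 < r) (hr1 : r < 1) :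
    |F (-1) r - Real.log (1/r)| ≤ 1/2 + |F (-1) 1| := by
  have hmid : (∫ t in Set.Ioc r 1, t ^ (-1:ℝ) * Real.exp (-t ^ 2 / 2))
      = (∫ t in Set.Ioc r 1, t⁻¹) + ∫ t in Set.Ioc r 1, t⁻¹ * (Real.exp (-t ^ 2 / 2) - 1) := by
    rw [← MeasureTheory.integral_add]
    · apply MeasureTheory.setIntegral_congr_fun measurableSet_Ioc
      intro t ht
      have ht0 : 0 < t := hr.trans ht.1
      show t ^ (-1:ℝ) * Real.exp (-t ^ 2 / 2) = t⁻¹ + t⁻¹ * (Real.exp (-t ^ 2 / 2) - 1)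
      rw [Real.rpow_neg_one]
      ring
    · apply ContinuousOn.integrableOn_Icc (by
        exact continuousOn_id.inv₀ fun t ht => ne_of_gt (lt_of_lt_of_le hr ht.1))
        |>.mono_set Set.Ioc_subset_Icc_self
    · have hc : ContinuousOn (fun t : ℝ => t⁻¹ * (Real.exp (-t ^ 2 / 2) - 1))
          (Set.Icc r 1) := by
        apply ContinuousOn.mul
        · exact continuousOn_id.inv₀ fun t ht => ne_of_gt (lt_of_lt_of_le hr ht.1)
        · fun_prop
      exact hc.integrableOn_Icc.mono_set Set.Ioc_subset_Icc_self
  have hlog : (∫ t in Set.Ioc r 1, t⁻¹) = Real.log (1/r) := by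
    rw [← intervalIntegral.integral_of_le hr1.le, integral_inv_of_pos hr one_pos]
  have hD : |∫ t in Set.Ioc r 1, t⁻¹ * (Real.exp (-t ^ 2 / 2) - 1)| ≤ 1/2 := by
    have hb : ∀ t ∈ Set.Ioc r 1, ‖t⁻¹ * (Real.exp (-t ^ 2 / 2) - 1)‖ ≤ 1/2 := by
      intro t ht
      have ht0 : 0 < t := hr.trans ht.1
      have hle1 : Real.exp (-t ^ 2 / 2) ≤ 1 := by
        rw [show (1:ℝ) = Real.exp 0 from (Real.exp_zero).symm]
        apply Real.exp_le_exp.mpr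
        nlinarith
      have hge : 1 - Real.exp (-t ^ 2 / 2) ≤ t ^ 2 / 2 := by
        have := Real.add_one_le_exp (-t ^ 2 / 2)
        linarith
      rw [norm_mul, Real.norm_eq_abs, Real.norm_eq_abs, abs_of_pos (inv_pos.mpr ht0),
        abs_of_nonpos (by linarith)]
      have h1 : t⁻¹ * -(Real.exp (-t ^ 2 / 2) - 1) ≤ t⁻¹ * (t ^ 2 / 2) := by
        apply mul_le_mul_of_nonneg_left (by linarith) (inv_pos.mpr ht0).le
      have h2 : t⁻¹ * (t ^ 2 / 2) = t / 2 := by field_simp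
      have h3 : t / 2 ≤ 1 / 2 := by linarith [ht.2]
      linarith
    have hmeas : AEStronglyMeasurable (fun t : ℝ => t⁻¹ * (Real.exp (-t ^ 2 / 2) - 1))
        (volume.restrict (Set.Ioc r 1)) := by
      have hc : ContinuousOn (fun t : ℝ => t⁻¹ * (Real.exp (-t ^ 2 / 2) - 1))
          (Set.Ioc r 1) := by
        apply ContinuousOn.mul
        · exact continuousOn_id.inv₀ fun t ht => ne_of_gt (hr.trans ht.1)
        · fun_prop
      exact hc.aestronglyMeasurable measurableSet_Ioc
    have := MeasureTheory.norm_setIntegral_le_of_norm_le_const (C := 1/2)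
      (by rw [Real.volume_Ioc]; exact ENNReal.ofReal_lt_top) hb
    rw [Real.norm_eq_abs] at this
    refine this.trans ?_
    rw [Real.volume_real_Ioc_of_le (by linarith)]
    nlinarith
  rw [F_split hr hr1, hmid, hlog]
  have := abs_add_le (∫ t in Set.Ioc r 1, t⁻¹ * (Real.exp (-t ^ 2 / 2) - 1)) (F (-1) 1)
  calc |Real.log (1/r) + (∫ t in Set.Ioc r 1, t⁻¹ * (Real.exp (-t ^ 2 / 2) - 1)) + F (-1) 1
        - Real.log (1/r)|
      = |(∫ t in Set.Ioc r 1, t⁻¹ * (Real.exp (-t ^ 2 / 2) - 1)) + F (-1) 1| := by congr 1; ring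
    _ ≤ _ := by linarith [this, hD]

lemma hlog_top : Tendsto (fun r : ℝ => Real.log (1/r)) (nhdsWithin 0 (Set.Ioi 0)) atTop := by
  have := Real.tendsto_log_atTop.comp tendsto_inv_nhdsGT_zero
  simpa [Function.comp_def, one_div] using this

lemma part4 : Tendsto (fun r => r * Real.log (1 / r) * rho 2 r)
    (nhdsWithin 0 (Set.Ioi 0)) (nhds 1) := by
  have hT : Tendsto (fun r => F (-1) r / Real.log (1/r)) (nhdsWithin 0 (Set.Ioi 0))
      (nhds 1) := by
    have h0 : Tendsto (fun r => F (-1) r / Real.log (1/r) - 1) (nhdsWithin 0 (Set.Ioi 0))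
        (nhds 0) := by
      apply squeeze_zero_norm'
        (a := fun r => (1/2 + |F (-1) 1|) / Real.log (1/r))
      · filter_upwards [Ioo_mem_nhdsGT_of_mem (by constructor <;> norm_num :
          (0:ℝ) ∈ Set.Ico 0 1)] with r hr
        have hr0 : 0 < r := hr.1
        have hinv : 1 < 1/r := by rw [lt_div_iff₀ hr0]; linarith [hr.2]
        have hlogpos : 0 < Real.log (1/r) := Real.log_pos hinv
        rw [div_sub_one hlogpos.ne', Real.norm_eq_abs, abs_div,
          abs_of_pos hlogpos]
        gcongr
        exact F_log_bound hr0 hr.2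
      · exact (tendsto_const_nhds).div_atTop hlog_top
    have := h0.add (tendsto_const_nhds (x := (1:ℝ)))
    simpa using this
  have hexp : Tendsto (fun r : ℝ => Real.exp (-r ^ 2 / 2)) (nhdsWithin 0 (Set.Ioi 0))
      (nhds 1) := by
    have hc : Continuous (fun r : ℝ => Real.exp (-r ^ 2 / 2)) := by fun_prop
    exact (hc.tendsto' 0 1 (by simp)).mono_left nhdsWithin_le_nhds
  have hmain := hexp.mul (hT.inv₀ one_ne_zero)
  rw [show (1:ℝ) * (1:ℝ)⁻¹ = 1 by norm_num] at hmain
  apply hmain.congr'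
  filter_upwards [Ioo_mem_nhdsGT_of_mem (by constructor <;> norm_num :
    (0:ℝ) ∈ Set.Ico 0 1)] with r hr
  have hr0 : 0 < r := hr.1
  have hinv : 1 < 1/r := by rw [lt_div_iff₀ hr0]; linarith [hr.2]
  have hlogpos : 0 < Real.log (1/r) := Real.log_pos hinv
  have hF : 0 < F (-1) r := F_pos (by norm_num) hr0
  rw [rho_def]
  rw [show (1 : ℝ) - ((2:ℕ) : ℝ) = -1 by norm_num, Real.rpow_neg_one]
  field_simp

lemma part1 {N : ℕ} (hN : 2 ≤ N) :
    Tendsto (rho N) (nhdsWithin 0 (Set.Ioi 0)) atTop := by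
  rcases eq_or_lt_of_le hN with h2 | h3
  · -- N = 2
    have hN2 : N = 2 := h2.symm
    subst hN2
    have hz : Tendsto (fun r : ℝ => r * Real.log (1/r)) (nhdsWithin 0 (Set.Ioi 0))
        (nhdsWithin 0 (Set.Ioi 0)) := by
      rw [tendsto_nhdsWithin_iff]
      constructor
      · have h := (tendsto_log_mul_rpow_nhdsGT_zero zero_lt_one).neg
        simp only [Real.rpow_one, neg_zero] at h
        apply h.congr
        intro r
        rw [one_div, Real.log_inv]
        ring
      · filter_upwards [Ioo_mem_nhdsGT_of_mem (by constructor <;> norm_num :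
          (0:ℝ) ∈ Set.Ico 0 1)] with r hr
        have hr0 : 0 < r := hr.1
        have hinv : 1 < 1/r := by rw [lt_div_iff₀ hr0]; linarith [hr.2]
        exact mul_pos hr0 (Real.log_pos hinv)
    have hinv : Tendsto (fun r : ℝ => (r * Real.log (1/r))⁻¹) (nhdsWithin 0 (Set.Ioi 0))
        atTop := hz.inv_tendsto_nhdsGT_zero
    have hm := Filter.Tendsto.pos_mul_atTop one_pos part4 hinv
    apply hm.congr'
    filter_upwards [Ioo_mem_nhdsGT_of_mem (by constructor <;> norm_num :
      (0:ℝ) ∈ Set.Ico 0 1)] with r hr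
    have hr0 : 0 < r := hr.1
    have h1r : 1 < 1/r := by rw [lt_div_iff₀ hr0]; linarith [hr.2]
    have hne : r * Real.log (1/r) ≠ 0 := (mul_pos hr0 (Real.log_pos h1r)).ne'
    field_simp
    exact mul_div_cancel_left₀ _ (Real.log_pos h1r).ne'
  · -- 3 ≤ N
    have hN3 : 3 ≤ N := h3
    have hpos : (0:ℝ) < (N:ℝ) - 2 := by
      have : (3:ℝ) ≤ (N:ℝ) := by exact_mod_cast hN3
      linarith
    have hm := Filter.Tendsto.pos_mul_atTop hpos (part3 hN3) tendsto_inv_nhdsGT_zero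
    apply hm.congr'
    filter_upwards [self_mem_nhdsWithin] with r hr
    have hr0 : (0:ℝ) < r := hr
    field_simp

end RhoAux

/-- Asymptotic behaviour of `ρ_N`: it blows up at `0⁺` and at `+∞`; moreover
`r ρ_N(r) → N−2` as `r → 0⁺` when `N ≥ 3`, and `r log(1/r) ρ_2(r) → 1` as
`r → 0⁺` when `N = 2`. -/
theorem rho_asymptotics (N : ℕ) (hN : 2 ≤ N) :
    Tendsto (rho N) (nhdsWithin 0 (Set.Ioi 0)) atTop ∧
    Tendsto (rho N) atTop atTop ∧
    (3 ≤ N →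
      Tendsto (fun r => r * rho N r) (nhdsWithin 0 (Set.Ioi 0)) (nhds ((N : ℝ) - 2))) ∧
    (N = 2 →
      Tendsto (fun r => r * Real.log (1 / r) * rho N r) (nhdsWithin 0 (Set.Ioi 0))
        (nhds 1)) := by
  refine ⟨RhoAux.part1 hN, RhoAux.part2 hN, fun h3 => RhoAux.part3 h3, fun h2 => ?_⟩
  subst h2
  exact RhoAux.part4
end

section
/- For N ≥ 2, the function ρ_N attains a minimum on (0, +∞) at a unique point T > 0; moreover ρ_N(T) > 0, and ρ_N has no point of positive local maximum in (0, +∞). -/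
open MeasureTheory

open Set Real Filter Topology

noncomputable def ff (N : ℕ) (r : ℝ) : ℝ := r ^ (1 - (N : ℝ)) * Real.exp (-r ^ 2 / 2)
noncomputable def FF (N : ℕ) (r : ℝ) : ℝ := ∫ t in Set.Ioi r, ff N t

lemma ff_pos {N : ℕ} {r : ℝ} (hr : 0 < r) : 0 < ff N r :=
  mul_pos (Real.rpow_pos_of_pos hr _) (Real.exp_pos _)

lemma ff_contAt {N : ℕ} {r : ℝ} (hr : 0 < r) : ContinuousAt (ff N) r := by
  apply ContinuousAt.mul
  · exact Real.continuousAt_rpow_const _ _ (Or.inl hr.ne')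
  · exact (Real.continuous_exp.comp (by continuity)).continuousAt

lemma ff_contOn {N : ℕ} : ContinuousOn (ff N) (Set.Ioi 0) :=
  fun x hx => (ff_contAt hx).continuousWithinAt

lemma ff_le {N : ℕ} (hN : 1 ≤ N) {r t : ℝ} (hr : 0 < r) (ht : r ≤ t) :
    ff N t ≤ r ^ (1 - (N : ℝ)) * Real.exp (-(1/2) * t ^ 2) := by
  have h1 : t ^ (1 - (N : ℝ)) ≤ r ^ (1 - (N : ℝ)) := by
    apply Real.rpow_le_rpow_of_nonpos hr ht
    have : (1:ℝ) ≤ (N:ℝ) := by exact_mod_cast hN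
    linarith
  have h2 : Real.exp (-t ^ 2 / 2) = Real.exp (-(1/2) * t ^ 2) := by ring_nf
  rw [ff, h2]
  exact mul_le_mul_of_nonneg_right h1 (Real.exp_pos _).le

lemma ff_integrableOn {N : ℕ} (hN : 1 ≤ N) {r : ℝ} (hr : 0 < r) :
    IntegrableOn (ff N) (Set.Ioi r) := by
  apply Integrable.mono' (g := fun t => r ^ (1 - (N : ℝ)) * Real.exp (-(1/2) * t ^ 2))
  · exact ((integrable_exp_neg_mul_sq (by norm_num : (0:ℝ) < 1/2)).const_mul _).integrableOn
  · exact ((ff_contOn (N := N)).mono (Set.Ioi_subset_Ioi hr.le)).aestronglyMeasurable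
      measurableSet_Ioi
  · filter_upwards [ae_restrict_mem measurableSet_Ioi] with t ht
    rw [Real.norm_eq_abs, abs_of_pos (ff_pos (hr.trans ht))]
    exact ff_le hN hr ht.le

lemma FF_pos {N : ℕ} (hN : 1 ≤ N) {r : ℝ} (hr : 0 < r) : 0 < FF N r := by
  rw [FF, setIntegral_pos_iff_support_of_nonneg_ae]
  · have hsub : Set.Ioi r ⊆ Function.support (ff N) ∩ Set.Ioi r :=
      fun x hx => ⟨Function.mem_support.2 (ff_pos (hr.trans hx)).ne', hx⟩
    calc (0 : ENNReal) < volume (Set.Ioi r) := by rw [Real.volume_Ioi]; exact ENNReal.zero_lt_top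
    _ ≤ _ := measure_mono hsub
  · filter_upwards [ae_restrict_mem measurableSet_Ioi] with t ht
    exact (ff_pos (hr.trans ht)).le
  · exact ff_integrableOn hN hr

lemma ff_intervalIntegrable {N : ℕ} {a b : ℝ} (ha : 0 < a) (hb : 0 < b) :
    IntervalIntegrable (ff N) volume a b := by
  apply ContinuousOn.intervalIntegrable
  apply ff_contOn.mono
  intro x hx
  rcases le_total a b with h | h
  · rw [Set.uIcc_of_le h] at hx; exact lt_of_lt_of_le ha hx.1
  · rw [Set.uIcc_of_ge h] at hx; exact lt_of_lt_of_le hb hx.1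

lemma FF_eq {N : ℕ} (hN : 1 ≤ N) {r : ℝ} (hr : 0 < r) :
    FF N r = FF N 1 - ∫ t in (1:ℝ)..r, ff N t := by
  rcases le_total r 1 with h | h
  · rw [intervalIntegral.integral_symm, intervalIntegral.integral_of_le h, sub_neg_eq_add]
    have hu : Set.Ioc r 1 ∪ Set.Ioi 1 = Set.Ioi r := Set.Ioc_union_Ioi_eq_Ioi h
    have := setIntegral_union (f := ff N) (μ := volume)
      (Set.Ioc_disjoint_Ioi le_rfl) measurableSet_Ioi
      ((ff_integrableOn hN hr).mono_set (by rw [← hu]; exact Set.subset_union_left))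
      (ff_integrableOn hN one_pos)
    rw [FF, FF, ← hu, this]; ring
  · rw [intervalIntegral.integral_of_le h]
    have hu : Set.Ioc 1 r ∪ Set.Ioi r = Set.Ioi 1 := Set.Ioc_union_Ioi_eq_Ioi h
    have := setIntegral_union (f := ff N) (μ := volume)
      (Set.Ioc_disjoint_Ioi le_rfl) measurableSet_Ioi
      ((ff_integrableOn hN one_pos).mono_set (by rw [← hu]; exact Set.subset_union_left))
      (ff_integrableOn hN hr)
    rw [FF, FF, ← hu, this]; ring

lemma FF_hasDerivAt {N : ℕ} (hN : 1 ≤ N) {r : ℝ} (hr : 0 < r) :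
    HasDerivAt (FF N) (-(ff N r)) r := by
  have h1 : HasDerivAt (fun u => FF N 1 - ∫ t in (1:ℝ)..u, ff N t) (-(ff N r)) r := by
    apply HasDerivAt.const_sub
    apply intervalIntegral.integral_hasDerivAt_right (ff_intervalIntegrable one_pos hr)
    · exact ContinuousOn.stronglyMeasurableAtFilter isOpen_Ioi ff_contOn r hr
    · exact ff_contAt hr
  apply h1.congr_of_eventuallyEq
  filter_upwards [Ioi_mem_nhds hr] with x hx
  exact FF_eq hN hx

lemma rho_eq (N : ℕ) (r : ℝ) : rho N r = ff N r / FF N r := rfl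

lemma rho_pos {N : ℕ} (hN : 1 ≤ N) {r : ℝ} (hr : 0 < r) : 0 < rho N r :=
  div_pos (ff_pos hr) (FF_pos hN hr)

lemma ff_hasDerivAt {N : ℕ} {r : ℝ} (hr : 0 < r) :
    HasDerivAt (ff N) (((1 - (N:ℝ)) / r - r) * ff N r) r := by
  have h1 : HasDerivAt (fun x : ℝ => x ^ (1 - (N:ℝ)))
      ((1 - (N:ℝ)) * r ^ (1 - (N:ℝ) - 1)) r :=
    Real.hasDerivAt_rpow_const (Or.inl hr.ne')
  have h2 : HasDerivAt (fun x : ℝ => Real.exp (-x ^ 2 / 2))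
      (Real.exp (-r ^ 2 / 2) * (-r)) r := by
    have : HasDerivAt (fun x : ℝ => -x ^ 2 / 2) (-r) r := by
      have := ((hasDerivAt_pow 2 r).neg).div_const 2
      exact this.congr_deriv (by norm_num; ring)
    exact (Real.hasDerivAt_exp _).comp r this
  have h3 := h1.mul h2
  refine h3.congr_deriv ?_
  have hrpow : r ^ (1 - (N:ℝ) - 1) = r ^ (1 - (N:ℝ)) / r := by
    rw [Real.rpow_sub hr, Real.rpow_one]
  rw [ff, hrpow]
  field_simp
  ring

noncomputable def gg (N : ℕ) (r : ℝ) : ℝ := r + ((N:ℝ) - 1) / r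

noncomputable def DD (N : ℕ) (r : ℝ) : ℝ := rho N r * (rho N r - gg N r)

lemma rho_hasDerivAt {N : ℕ} (hN : 1 ≤ N) {r : ℝ} (hr : 0 < r) :
    HasDerivAt (rho N) (DD N r) r := by
  have hF := FF_hasDerivAt hN hr
  have hf := ff_hasDerivAt (N := N) hr
  have hne : FF N r ≠ 0 := (FF_pos hN hr).ne'
  have h := hf.div hF hne
  have heq : ∀ x, rho N x = ff N x / FF N x := fun x => rfl
  have h2 : HasDerivAt (rho N)
      ((((1 - (N:ℝ)) / r - r) * ff N r * FF N r - ff N r * -(ff N r)) / FF N r ^ 2) r := by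
    apply h.congr_of_eventuallyEq
    exact Filter.Eventually.of_forall heq
  convert h2 using 1
  rw [DD, rho_eq, gg]
  field_simp
  ring

lemma neg_ff_hasDerivAt {N : ℕ} {x : ℝ} (hx : 0 < x) :
    HasDerivAt (fun t => -(ff N t)) (gg N x * ff N x) x := by
  have := (ff_hasDerivAt (N := N) hx).neg
  refine this.congr_deriv ?_
  rw [gg]
  field_simp
  ring

lemma t_exp_le {t : ℝ} (ht : 0 ≤ t) : t * Real.exp (-(1/4) * t ^ 2) ≤ 1 := by
  have h0 := Real.add_one_le_exp ((1/4) * t ^ 2)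
  have h1 : t ≤ Real.exp ((1/4) * t ^ 2) := by nlinarith [sq_nonneg (t - 2)]
  have h2 : Real.exp ((1/4) * t ^ 2) * Real.exp (-(1/4) * t ^ 2) = 1 := by
    rw [← Real.exp_add]; norm_num
  nlinarith [Real.exp_pos (-(1/4) * t ^ 2), Real.exp_pos ((1/4) * t ^ 2)]

lemma ggff_le {N : ℕ} (hN : 1 ≤ N) {r t : ℝ} (hr : 0 < r) (ht : r < t) :
    gg N t * ff N t ≤
      (r ^ (1 - (N:ℝ)) + ((N:ℝ) - 1) * r ^ (-(N:ℝ))) * Real.exp (-(1/4) * t ^ 2) := by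
  have hN1 : (1:ℝ) ≤ (N:ℝ) := by exact_mod_cast hN
  have ht0 : 0 < t := hr.trans ht
  set A := Real.exp (-(1/4) * t ^ 2) with hAdef
  set P := t ^ (1 - (N:ℝ)) with hPdef
  set Q := t ^ (-(N:ℝ)) with hQdef
  set B := r ^ (1 - (N:ℝ)) with hBdef
  set C := r ^ (-(N:ℝ)) with hCdef
  have hApos : 0 < A := Real.exp_pos _
  have hPpos : 0 < P := Real.rpow_pos_of_pos ht0 _
  have hQpos : 0 < Q := Real.rpow_pos_of_pos ht0 _
  have hBpos : 0 < B := Real.rpow_pos_of_pos hr _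
  have hCpos : 0 < C := Real.rpow_pos_of_pos hr _
  have hPB : P ≤ B := Real.rpow_le_rpow_of_nonpos hr ht.le (by linarith)
  have hQC : Q ≤ C := Real.rpow_le_rpow_of_nonpos hr ht.le (by linarith)
  have hA1 : A ≤ 1 := Real.exp_le_one_iff.2 (by nlinarith)
  have htA : t * A ≤ 1 := t_exp_le ht0.le
  have hexp : Real.exp (-t ^ 2 / 2) = A * A := by
    rw [hAdef, ← Real.exp_add]; ring_nf
  have hQt : Q * t = P := by
    rw [hQdef, hPdef, show (1 - (N:ℝ)) = -(N:ℝ) + 1 by ring, Real.rpow_add ht0,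
      Real.rpow_one]
  have expand : gg N t * ff N t = (P * (t * A)) * A + ((N:ℝ) - 1) * Q * (A * A) := by
    rw [gg, ff, hexp, ← hPdef, ← hQt]
    field_simp
  have e1 : P * (t * A) ≤ B := le_trans (by nlinarith) hPB
  have hAA : A * A ≤ A := by nlinarith
  have t2 : ((N:ℝ) - 1) * Q * (A * A) ≤ ((N:ℝ) - 1) * C * A := by
    apply mul_le_mul _ hAA (by positivity) (mul_nonneg (by linarith) hCpos.le)
    exact mul_le_mul_of_nonneg_left hQC (by linarith)
  calc gg N t * ff N t = (P * (t * A)) * A + ((N:ℝ) - 1) * Q * (A * A) := expand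
    _ ≤ B * A + ((N:ℝ) - 1) * C * A := by
        have := mul_le_mul_of_nonneg_right e1 hApos.le
        linarith
    _ = (B + ((N:ℝ) - 1) * C) * A := by ring

lemma ggff_integrableOn {N : ℕ} (hN : 1 ≤ N) {r : ℝ} (hr : 0 < r) :
    IntegrableOn (fun t => gg N t * ff N t) (Set.Ioi r) := by
  apply Integrable.mono'
    (g := fun t => (r ^ (1 - (N:ℝ)) + ((N:ℝ) - 1) * r ^ (-(N:ℝ))) * Real.exp (-(1/4) * t ^ 2))
  · exact ((integrable_exp_neg_mul_sq (by norm_num : (0:ℝ) < 1/4)).const_mul _).integrableOn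
  · apply ContinuousOn.aestronglyMeasurable _ measurableSet_Ioi
    apply ContinuousOn.mul _ (ff_contOn.mono (Set.Ioi_subset_Ioi hr.le))
    intro x hx
    have hx0 : 0 < x := hr.trans hx
    exact (ContinuousAt.add continuousAt_id
      ((continuousAt_const.div continuousAt_id hx0.ne'))).continuousWithinAt
  · filter_upwards [ae_restrict_mem measurableSet_Ioi] with t ht
    have ht0 : 0 < t := hr.trans ht
    have hN1 : (1:ℝ) ≤ (N:ℝ) := by exact_mod_cast hN
    have hgpos : 0 < gg N t := by
      rw [gg]
      have : 0 ≤ ((N:ℝ) - 1) / t := div_nonneg (by linarith) ht0.le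
      linarith
    rw [Real.norm_eq_abs, abs_of_pos (mul_pos hgpos (ff_pos ht0))]
    exact ggff_le hN hr ht

lemma ff_tendsto_zero {N : ℕ} (hN : 1 ≤ N) : Filter.Tendsto (ff N) Filter.atTop (nhds 0) := by
  apply squeeze_zero' (g := fun t : ℝ => Real.exp (-t ^ 2 / 2))
  · filter_upwards [Filter.eventually_ge_atTop 1] with t ht
    exact (ff_pos (lt_of_lt_of_le one_pos ht)).le
  · filter_upwards [Filter.eventually_ge_atTop 1] with t ht
    rw [ff]
    have h1 : t ^ (1 - (N:ℝ)) ≤ 1 :=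
      Real.rpow_le_one_of_one_le_of_nonpos ht (by
        have : (1:ℝ) ≤ (N:ℝ) := by exact_mod_cast hN
        linarith)
    nth_rewrite 2 [← one_mul (Real.exp (-t ^ 2 / 2))]
    exact mul_le_mul_of_nonneg_right h1 (Real.exp_pos _).le
  · have h1 : Filter.Tendsto (fun t : ℝ => -t ^ 2 / 2) Filter.atTop Filter.atBot := by
      apply Filter.Tendsto.atBot_div_const (by norm_num : (0:ℝ) < 2)
      exact Filter.tendsto_neg_atBot_iff.2 (tendsto_pow_atTop (by norm_num))
    exact Real.tendsto_exp_atBot.comp h1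

lemma integral_ggff {N : ℕ} (hN : 1 ≤ N) {r : ℝ} (hr : 0 < r) :
    ∫ t in Set.Ioi r, gg N t * ff N t = ff N r := by
  have h := integral_Ioi_of_hasDerivAt_of_tendsto (f := fun t => -(ff N t))
    (f' := fun t => gg N t * ff N t) (a := r) (m := 0)
    ?_ (fun x hx => neg_ff_hasDerivAt (hr.trans hx)) (ggff_integrableOn hN hr) ?_
  · rw [h]; ring
  · exact ((ff_contAt hr).neg).continuousWithinAt
  · simpa using (ff_tendsto_zero (N := N) hN).neg

lemma rho_ge {N : ℕ} (hN : 1 ≤ N) {r : ℝ} (hr : 0 < r) : r ≤ rho N r := by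
  rw [rho_eq, le_div_iff₀ (FF_pos hN hr)]
  have h1 : r * FF N r = ∫ t in Set.Ioi r, r * ff N t := by
    rw [FF, integral_const_mul]
  rw [h1, ← integral_ggff hN hr]
  apply setIntegral_mono_on ((ff_integrableOn hN hr).const_mul r) (ggff_integrableOn hN hr)
    measurableSet_Ioi
  intro t ht
  have ht0 : 0 < t := hr.trans ht
  apply mul_le_mul_of_nonneg_right _ (ff_pos ht0).le
  rw [gg]
  have hN1 : (1:ℝ) ≤ (N:ℝ) := by exact_mod_cast hN
  have : 0 ≤ ((N:ℝ) - 1) / t := div_nonneg (by linarith) ht0.le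
  linarith [le_of_lt (show r < t from ht)]

lemma FF_split {N : ℕ} (hN : 1 ≤ N) {r s : ℝ} (hr : 0 < r) (hrs : r ≤ s) :
    FF N r = (∫ t in Set.Ioc r s, ff N t) + FF N s := by
  have hs : 0 < s := lt_of_lt_of_le hr hrs
  have hu : Set.Ioc r s ∪ Set.Ioi s = Set.Ioi r := Set.Ioc_union_Ioi_eq_Ioi hrs
  have := setIntegral_union (f := ff N) (μ := volume)
    (Set.Ioc_disjoint_Ioi le_rfl) measurableSet_Ioi
    ((ff_integrableOn hN hr).mono_set (by rw [← hu]; exact Set.subset_union_left))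
    (ff_integrableOn hN hs)
  rw [FF, FF, ← hu, this]

lemma rho_contAt {N : ℕ} (hN : 1 ≤ N) {r : ℝ} (hr : 0 < r) : ContinuousAt (rho N) r :=
  (rho_hasDerivAt hN hr).continuousAt

lemma rho_near_zero {N : ℕ} (hN : 2 ≤ N) {M : ℝ} (hM : 0 < M) :
    ∃ a : ℝ, 0 < a ∧ a ≤ 1/2 ∧ ∀ r : ℝ, 0 < r → r < a → M ≤ rho N r := by
  have hN1 : 1 ≤ N := le_trans (by norm_num) hN
  have hN2 : (2:ℝ) ≤ (N:ℝ) := by exact_mod_cast hN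
  set δ := min (1/2 : ℝ) (Real.exp (-(1:ℝ)/2) / (2*M)) with hδdef
  have hδ0 : 0 < δ := lt_min (by norm_num) (by positivity)
  have hδhalf : δ ≤ 1/2 := min_le_left _ _
  have hδM : M * δ ≤ Real.exp (-(1:ℝ)/2) / 2 := by
    have := min_le_right (1/2 : ℝ) (Real.exp (-(1:ℝ)/2) / (2*M))
    calc M * δ ≤ M * (Real.exp (-(1:ℝ)/2) / (2*M)) :=
          mul_le_mul_of_nonneg_left this hM.le
      _ = Real.exp (-(1:ℝ)/2) / 2 := by field_simp
  set C := 2 * M * FF N δ * Real.exp ((1:ℝ)/2) with hCdef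
  have hC0 : 0 < C := by
    have := FF_pos hN1 hδ0
    positivity
  refine ⟨min δ (1/(C+1)), lt_min hδ0 (by positivity), le_trans (min_le_left _ _) hδhalf,
    fun r hr hra => ?_⟩
  have hrδ : r < δ := lt_of_lt_of_le hra (min_le_left _ _)
  have hr1 : r ≤ 1 := le_trans hrδ.le (hδhalf.trans (by norm_num))
  have hrC : C ≤ r ^ (1 - (N:ℝ)) := by
    have h1 : r ^ (-1 : ℝ) ≤ r ^ (1 - (N:ℝ)) :=
      Real.rpow_le_rpow_of_exponent_ge hr hr1 (by linarith)
    have h2 : C + 1 ≤ r ^ (-1 : ℝ) := by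
      rw [Real.rpow_neg_one]
      rw [le_inv_comm₀ (by positivity) hr]
      calc r ≤ min δ (1/(C+1)) := hra.le
        _ ≤ 1/(C+1) := min_le_right _ _
        _ = (C+1)⁻¹ := one_div _
    linarith
  -- lower bound on ff
  have hff : r ^ (1 - (N:ℝ)) * Real.exp (-(1:ℝ)/2) ≤ ff N r := by
    rw [ff]
    apply mul_le_mul_of_nonneg_left _ (Real.rpow_pos_of_pos hr _).le
    apply Real.exp_le_exp.2
    nlinarith
  -- upper bound on FF
  have hFF : FF N r ≤ r ^ (1 - (N:ℝ)) * δ + FF N δ := by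
    rw [FF_split hN1 hr hrδ.le]
    have hbound : ∫ t in Set.Ioc r δ, ff N t ≤ r ^ (1 - (N:ℝ)) * δ := by
      have h1 : ∫ t in Set.Ioc r δ, ff N t ≤ ∫ _ in Set.Ioc r δ, r ^ (1 - (N:ℝ)) := by
        apply setIntegral_mono_on _ (integrableOn_const measure_Ioc_lt_top.ne)
          measurableSet_Ioc
        · intro t ht
          have ht0 : 0 < t := hr.trans ht.1
          calc ff N t ≤ t ^ (1 - (N:ℝ)) := by
                rw [ff]
                nth_rewrite 2 [← mul_one (t ^ (1 - (N:ℝ)))]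
                exact mul_le_mul_of_nonneg_left (Real.exp_le_one_iff.2 (by nlinarith))
                  (Real.rpow_pos_of_pos ht0 _).le
            _ ≤ r ^ (1 - (N:ℝ)) := Real.rpow_le_rpow_of_nonpos hr ht.1.le (by linarith)
        · exact (ff_integrableOn hN1 hr).mono_set Set.Ioc_subset_Ioi_self
      rw [setIntegral_const] at h1
      calc ∫ t in Set.Ioc r δ, ff N t ≤ (volume (Set.Ioc r δ)).toReal * r ^ (1 - (N:ℝ)) := by
            simpa [ENNReal.toReal_ofReal'] using h1
        _ ≤ δ * r ^ (1 - (N:ℝ)) := by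
            apply mul_le_mul_of_nonneg_right _ (Real.rpow_pos_of_pos hr _).le
            rw [Real.volume_Ioc, ENNReal.toReal_ofReal (by linarith)]
            linarith
        _ = r ^ (1 - (N:ℝ)) * δ := mul_comm _ _
    linarith
  -- combine
  rw [rho_eq, le_div_iff₀ (FF_pos hN1 hr)]
  have key : M * FF N δ ≤ r ^ (1 - (N:ℝ)) * Real.exp (-(1:ℝ)/2) / 2 := by
    have e1 : 0 < Real.exp ((1:ℝ)/2) := Real.exp_pos _
    have he : Real.exp ((1:ℝ)/2) * Real.exp (-(1:ℝ)/2) = 1 := by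
      rw [← Real.exp_add]; norm_num
    have : C * Real.exp (-(1:ℝ)/2) / 2 = M * FF N δ := by
      rw [hCdef]
      linear_combination (M * FF N δ) * he
    rw [← this]
    have := mul_le_mul_of_nonneg_right hrC (Real.exp_pos (-(1:ℝ)/2)).le
    linarith
  calc M * FF N r ≤ M * (r ^ (1 - (N:ℝ)) * δ + FF N δ) :=
        mul_le_mul_of_nonneg_left hFF hM.le
    _ = r ^ (1 - (N:ℝ)) * (M * δ) + M * FF N δ := by ring
    _ ≤ r ^ (1 - (N:ℝ)) * (Real.exp (-(1:ℝ)/2) / 2)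
        + r ^ (1 - (N:ℝ)) * Real.exp (-(1:ℝ)/2) / 2 := by
        have := mul_le_mul_of_nonneg_left hδM (Real.rpow_pos_of_pos hr (1 - (N:ℝ))).le
        linarith [key]
    _ = r ^ (1 - (N:ℝ)) * Real.exp (-(1:ℝ)/2) := by ring
    _ ≤ ff N r := hff

lemma exists_min {N : ℕ} (hN : 2 ≤ N) :
    ∃ T : ℝ, 0 < T ∧ ∀ r : ℝ, 0 < r → rho N T ≤ rho N r := by
  have hN1 : 1 ≤ N := le_trans (by norm_num) hN
  have hM : 0 < rho N 1 + 1 := by linarith [rho_pos hN1 one_pos]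
  obtain ⟨a, ha0, ha1, hA⟩ := rho_near_zero hN hM
  set b := max 1 (rho N 1 + 1) with hbdef
  have hab : a ≤ b := le_trans (ha1.trans (by norm_num)) (le_max_left _ _)
  have hmem1 : (1:ℝ) ∈ Set.Icc a b := ⟨ha1.trans (by norm_num), le_max_left _ _⟩
  obtain ⟨T, hT, hTmin⟩ := isCompact_Icc.exists_isMinOn (Set.nonempty_Icc.2 hab)
    (fun x hx => (rho_contAt hN1 (lt_of_lt_of_le ha0 hx.1)).continuousWithinAt)
  refine ⟨T, lt_of_lt_of_le ha0 hT.1, fun r hr => ?_⟩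
  rcases lt_or_ge r a with h | h
  · calc rho N T ≤ rho N 1 := hTmin hmem1
      _ ≤ rho N 1 + 1 := by linarith
      _ ≤ rho N r := hA r hr h
  · rcases le_or_gt r b with h2 | h2
    · exact hTmin ⟨h, h2⟩
    · calc rho N T ≤ rho N 1 := hTmin hmem1
        _ ≤ rho N 1 + 1 := by linarith
        _ ≤ b := le_max_right _ _
        _ ≤ r := h2.le
        _ ≤ rho N r := rho_ge hN1 (lt_of_lt_of_le ha0 (hab.trans h2.le))

noncomputable def gd (N : ℕ) (r : ℝ) : ℝ := 1 - ((N:ℝ) - 1) / r ^ 2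

noncomputable def EE (N : ℕ) (r : ℝ) : ℝ :=
  DD N r * (rho N r - gg N r) + rho N r * (DD N r - gd N r)

lemma gg_hasDerivAt {N : ℕ} {r : ℝ} (hr : 0 < r) : HasDerivAt (gg N) (gd N r) r := by
  have h1 : HasDerivAt (fun x : ℝ => x + ((N:ℝ) - 1) / x)
      (1 + (0 * r - ((N:ℝ) - 1) * 1) / r ^ 2) r :=
    (hasDerivAt_id r).add ((hasDerivAt_const r ((N:ℝ) - 1)).div (hasDerivAt_id r) hr.ne')
  have h2 : (1 : ℝ) + (0 * r - ((N:ℝ) - 1) * 1) / r ^ 2 = gd N r := by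
    rw [gd]; ring
  rw [← h2]; exact h1

lemma DD_hasDerivAt {N : ℕ} (hN : 1 ≤ N) {r : ℝ} (hr : 0 < r) :
    HasDerivAt (DD N) (EE N r) r := by
  have h := (rho_hasDerivAt hN hr).mul ((rho_hasDerivAt hN hr).sub (gg_hasDerivAt (N := N) hr))
  have h2 : DD N r * (rho N r - gg N r) + rho N r * (DD N r - gd N r) = EE N r := rfl
  rw [← h2]
  exact h

lemma gd_hasDerivAt {N : ℕ} {r : ℝ} (hr : 0 < r) :
    HasDerivAt (gd N) (2 * ((N:ℝ) - 1) / r ^ 3) r := by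
  have h1 : HasDerivAt (fun x : ℝ => 1 - ((N:ℝ) - 1) / x ^ 2)
      (-((0 * r ^ 2 - ((N:ℝ) - 1) * (2 * r ^ 1)) / (r ^ 2) ^ 2)) r := by
    apply HasDerivAt.const_sub
    exact (hasDerivAt_const r ((N:ℝ) - 1)).div (hasDerivAt_pow 2 r) (pow_ne_zero 2 hr.ne')
  have h2 : -((0 * r ^ 2 - ((N:ℝ) - 1) * (2 * r ^ 1)) / (r ^ 2) ^ 2)
      = 2 * ((N:ℝ) - 1) / r ^ 3 := by
    field_simp
    ring
  rw [← h2]; exact h1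

lemma EE_hasDerivAt {N : ℕ} (hN : 1 ≤ N) {r : ℝ} (hr : 0 < r) :
    HasDerivAt (EE N)
      (EE N r * (rho N r - gg N r) + DD N r * (DD N r - gd N r)
        + (DD N r * (DD N r - gd N r) + rho N r * (EE N r - 2 * ((N:ℝ) - 1) / r ^ 3))) r := by
  have hrho := rho_hasDerivAt hN hr
  have hDD := DD_hasDerivAt hN hr
  have hgg := gg_hasDerivAt (N := N) hr
  have hgd := gd_hasDerivAt (N := N) hr
  exact (hDD.mul (hrho.sub hgg)).add (hrho.mul (hDD.sub hgd))

-- eventual sign lemmas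
lemma ev_pos_right {φ : ℝ → ℝ} {c x : ℝ} (h : HasDerivAt φ c x) (h0 : φ x = 0) (hc : 0 < c) :
    ∀ᶠ y in nhdsWithin x (Set.Ioi x), 0 < φ y := by
  have h1 := hasDerivAt_iff_tendsto_slope.1 h
  have h2 : ∀ᶠ y in nhdsWithin x {x}ᶜ, 0 < slope φ x y :=
    h1.eventually (eventually_gt_nhds hc)
  have h3 : ∀ᶠ y in nhdsWithin x (Set.Ioi x), 0 < slope φ x y :=
    Filter.Eventually.filter_mono (nhdsWithin_mono x (fun y hy => ne_of_gt hy)) h2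
  filter_upwards [h3, self_mem_nhdsWithin] with y hy hy2
  rw [slope_def_field] at hy
  have hyx : 0 < y - x := sub_pos.2 hy2
  rw [div_pos_iff] at hy
  rcases hy with ⟨ha, _⟩ | ⟨_, hb⟩
  · rw [h0] at ha; linarith
  · linarith

lemma ev_neg_right {φ : ℝ → ℝ} {c x : ℝ} (h : HasDerivAt φ c x) (h0 : φ x = 0) (hc : c < 0) :
    ∀ᶠ y in nhdsWithin x (Set.Ioi x), φ y < 0 := by
  have := ev_pos_right h.neg (by simp [h0]) (by linarith)
  filter_upwards [this] with y hy
  simpa using hy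

lemma ev_pos_left {φ : ℝ → ℝ} {c x : ℝ} (h : HasDerivAt φ c x) (h0 : φ x = 0) (hc : c < 0) :
    ∀ᶠ y in nhdsWithin x (Set.Iio x), 0 < φ y := by
  have h1 := hasDerivAt_iff_tendsto_slope.1 h
  have h2 : ∀ᶠ y in nhdsWithin x {x}ᶜ, slope φ x y < 0 :=
    h1.eventually (eventually_lt_nhds hc)
  have h3 : ∀ᶠ y in nhdsWithin x (Set.Iio x), slope φ x y < 0 :=
    Filter.Eventually.filter_mono (nhdsWithin_mono x (fun y hy => ne_of_lt hy)) h2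
  filter_upwards [h3, self_mem_nhdsWithin] with y hy hy2
  rw [slope_def_field] at hy
  have hyx : y - x < 0 := sub_neg.2 hy2
  rw [div_neg_iff] at hy
  rcases hy with ⟨ha, hb⟩ | ⟨ha, hb⟩
  · linarith
  · rw [h0] at ha; linarith

lemma ev_neg_left {φ : ℝ → ℝ} {c x : ℝ} (h : HasDerivAt φ c x) (h0 : φ x = 0) (hc : 0 < c) :
    ∀ᶠ y in nhdsWithin x (Set.Iio x), φ y < 0 := by
  have := ev_pos_left h.neg (by simp [h0]) (by linarith)
  filter_upwards [this] with y hy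
  simpa using hy

lemma EE_at_crit {N : ℕ} {r : ℝ} (hD : DD N r = 0) : EE N r = -(rho N r * gd N r) := by
  rw [EE, hD]; ring

lemma gd_neg {N : ℕ} {r : ℝ} (hr : 0 < r) (h : r ^ 2 < (N:ℝ) - 1) : gd N r < 0 := by
  rw [gd, sub_neg, lt_div_iff₀ (by positivity : (0:ℝ) < r ^ 2)]
  linarith

lemma gd_pos {N : ℕ} {r : ℝ} (hr : 0 < r) (h : (N:ℝ) - 1 < r ^ 2) : 0 < gd N r := by
  rw [gd, sub_pos, div_lt_iff₀ (by positivity : (0:ℝ) < r ^ 2)]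
  linarith

/-- To the right of a critical point at or beyond `√(N-1)`, `DD` is eventually negative. -/
lemma step_right {N : ℕ} (hN : 2 ≤ N) {r₀ : ℝ} (hr : 0 < r₀)
    (hge : (N:ℝ) - 1 ≤ r₀ ^ 2) (hD : DD N r₀ = 0) :
    ∃ u : ℝ, r₀ < u ∧ ∀ x ∈ Set.Ioo r₀ u, DD N x < 0 := by
  have hN1 : 1 ≤ N := le_trans (by norm_num) hN
  rcases lt_or_eq_of_le hge with hgt | heq
  · -- EE r₀ < 0
    have hE : EE N r₀ < 0 := by
      rw [EE_at_crit hD, neg_lt, neg_zero]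
      exact mul_pos (rho_pos hN1 hr) (gd_pos hr hgt)
    have hev := ev_neg_right (DD_hasDerivAt hN1 hr) hD hE
    rw [eventually_iff_exists_mem] at hev
    obtain ⟨s, hs, hprop⟩ := hev
    rw [mem_nhdsGT_iff_exists_Ioo_subset] at hs
    obtain ⟨u, hu, hsub⟩ := hs
    exact ⟨u, hu, fun x hx => hprop x (hsub hx)⟩
  · -- degenerate case : r₀^2 = (N:ℝ)-1 exactly
    have hgd0 : gd N r₀ = 0 := by
      rw [gd, heq, div_self (by positivity : (r₀:ℝ) ^ 2 ≠ 0), sub_self]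
    have hE0 : EE N r₀ = 0 := by rw [EE_at_crit hD, hgd0]; ring
    have hE' : EE N r₀ * (rho N r₀ - gg N r₀) + DD N r₀ * (DD N r₀ - gd N r₀)
        + (DD N r₀ * (DD N r₀ - gd N r₀) + rho N r₀ * (EE N r₀ - 2 * ((N:ℝ) - 1) / r₀ ^ 3))
        < 0 := by
      rw [hE0, hD]
      have h1 : 0 < 2 * ((N:ℝ) - 1) / r₀ ^ 3 := by
        have hN2 : (2:ℝ) ≤ (N:ℝ) := by exact_mod_cast hN
        have : 0 < (N:ℝ) - 1 := by linarith
        positivity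
      have h2 := rho_pos hN1 hr
      have := mul_pos h2 h1
      nlinarith
    have hev := ev_neg_right (EE_hasDerivAt hN1 hr) hE0 hE'
    rw [eventually_iff_exists_mem] at hev
    obtain ⟨s, hs, hprop⟩ := hev
    rw [mem_nhdsGT_iff_exists_Ioo_subset] at hs
    obtain ⟨u, hu, hsub⟩ := hs
    refine ⟨u, hu, fun x hx => ?_⟩
    -- DD is strictly decreasing on [r₀, u)
    have hanti : StrictAntiOn (DD N) (Set.Ico r₀ u) := by
      apply strictAntiOn_of_deriv_neg (convex_Ico r₀ u)
      · intro z hz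
        exact (DD_hasDerivAt hN1 (lt_of_lt_of_le hr hz.1)).continuousAt.continuousWithinAt
      · intro z hz
        rw [interior_Ico] at hz
        rw [(DD_hasDerivAt hN1 (hr.trans hz.1)).deriv]
        exact hprop z (hsub hz)
    have := hanti (Set.left_mem_Ico.2 (hu.trans_le le_rfl)) ⟨hx.1.le, hx.2⟩ hx.1
    rw [hD] at this
    exact this

/-- there is no critical point at or beyond `√(N-1)`. -/
lemma no_crit_ge {N : ℕ} (hN : 2 ≤ N) {r₀ : ℝ} (hr : 0 < r₀)
    (hge : (N:ℝ) - 1 ≤ r₀ ^ 2) (hD : DD N r₀ = 0) : False := by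
  have hN1 : 1 ≤ N := le_trans (by norm_num) hN
  obtain ⟨u, hu, hneg⟩ := step_right hN hr hge hD
  -- DD < 0 on all of (r₀, ∞)
  have hDneg : ∀ x, r₀ < x → DD N x < 0 := by
    by_contra hcon
    push_neg at hcon
    obtain ⟨x₀, hx₀, hx₀D⟩ := hcon
    set S := {x : ℝ | r₀ < x ∧ 0 ≤ DD N x} with hSdef
    have hSne : S.Nonempty := ⟨x₀, hx₀, hx₀D⟩
    have hSbdd : BddBelow S := ⟨r₀, fun y hy => hy.1.le⟩
    set r₁ := sInf S with hr₁def
    set u' := min u x₀ with hu'def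
    have hu'r₀ : r₀ < u' := lt_min hu hx₀
    have hlb : ∀ y ∈ S, u' ≤ y := by
      intro y hy
      by_contra hyu
      push_neg at hyu
      exact absurd hy.2 (not_le.2 (hneg y ⟨hy.1, hyu.trans_le (min_le_left _ _)⟩))
    have hr₁u' : u' ≤ r₁ := le_csInf hSne hlb
    have hr₁r₀ : r₀ < r₁ := hu'r₀.trans_le hr₁u'
    have hr₁pos : 0 < r₁ := hr.trans hr₁r₀
    have hbelow : ∀ x, r₀ < x → x < r₁ → DD N x < 0 := by
      intro x hx1 hx2
      by_contra hxD
      push_neg at hxD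
      exact absurd (csInf_le hSbdd ⟨hx1, hxD⟩) (not_le.2 hx2)
    have hcont : ContinuousAt (DD N) r₁ := (DD_hasDerivAt hN1 hr₁pos).continuousAt
    have hDr₁le : DD N r₁ ≤ 0 := by
      have htend : Filter.Tendsto (DD N) (nhdsWithin r₁ (Set.Iio r₁)) (nhds (DD N r₁)) :=
        hcont.continuousWithinAt.tendsto
      apply le_of_tendsto htend
      filter_upwards [Ioo_mem_nhdsLT_of_mem (Set.mem_Ioc.2 ⟨hr₁r₀, le_refl r₁⟩)] with
        y hy
      exact (hbelow y hy.1 hy.2).le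
    have hDr₁ge : 0 ≤ DD N r₁ := by
      by_contra hDneg'
      push_neg at hDneg'
      have hev : ∀ᶠ y in nhds r₁, DD N y < 0 := hcont.eventually_lt_const hDneg'
      rw [Metric.eventually_nhds_iff] at hev
      obtain ⟨δ, hδ, hball⟩ := hev
      have : r₁ + δ/2 ≤ r₁ := by
        apply le_csInf hSne
        intro y hy
        by_contra hyr
        push_neg at hyr
        have h1 : r₁ ≤ y := csInf_le hSbdd hy
        have h2 : dist y r₁ < δ := by
          rw [Real.dist_eq, abs_of_nonneg (by linarith)]
          linarith
        exact absurd hy.2 (not_le.2 (hball h2))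
      linarith
    have hD1 : DD N r₁ = 0 := le_antisymm hDr₁le hDr₁ge
    -- r₁ > r₀ ≥ √(N-1), so EE r₁ < 0, so DD > 0 just left of r₁ : contradiction
    have hgt : (N:ℝ) - 1 < r₁ ^ 2 := by nlinarith
    have hE : EE N r₁ < 0 := by
      rw [EE_at_crit hD1, neg_lt, neg_zero]
      exact mul_pos (rho_pos hN1 hr₁pos) (gd_pos hr₁pos hgt)
    have hev := ev_pos_left (DD_hasDerivAt hN1 hr₁pos) hD1 hE
    have hIoo : Set.Ioo r₀ r₁ ∈ nhdsWithin r₁ (Set.Iio r₁) :=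
      Ioo_mem_nhdsLT_of_mem (Set.mem_Ioc.2 ⟨hr₁r₀, le_refl r₁⟩)
    have hev2 : ∀ᶠ y in nhdsWithin r₁ (Set.Iio r₁), DD N y < 0 := by
      filter_upwards [hIoo] with y hy
      exact hbelow y hy.1 hy.2
    obtain ⟨y, hy1, hy2⟩ := (hev.and hev2).exists
    linarith
  -- rho is strictly decreasing beyond r₀, contradicting rho_ge
  have hanti : StrictAntiOn (rho N) (Set.Ici (r₀ + 1)) := by
    apply strictAntiOn_of_deriv_neg (convex_Ici _)
    · intro z hz
      exact (rho_contAt hN1 (by linarith [Set.mem_Ici.1 hz])).continuousWithinAt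
    · intro z hz
      rw [interior_Ici] at hz
      rw [(rho_hasDerivAt hN1 (by linarith [Set.mem_Ioi.1 hz])).deriv]
      exact hDneg z (by linarith [Set.mem_Ioi.1 hz])
  set y := max (r₀ + 2) (rho N (r₀ + 1)) with hydef
  have hy1 : r₀ + 1 < y := lt_of_lt_of_le (by linarith) (le_max_left _ _)
  have h1 : rho N y < rho N (r₀ + 1) :=
    hanti (Set.mem_Ici.2 (by linarith)) (Set.mem_Ici.2 hy1.le) hy1
  have h2 : y ≤ rho N y := rho_ge hN1 (by positivity)
  have h3 : rho N (r₀ + 1) ≤ y := le_max_right _ _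
  linarith

/-- every critical point is a strict local minimum. -/
lemma crit_strict_local_min {N : ℕ} (hN : 2 ≤ N) {r₀ : ℝ} (hr : 0 < r₀)
    (hD : DD N r₀ = 0) :
    ∃ ε : ℝ, 0 < ε ∧ ε ≤ r₀ ∧ (∀ x ∈ Set.Ioo r₀ (r₀ + ε), rho N r₀ < rho N x) ∧
      (∀ x ∈ Set.Ioo (r₀ - ε) r₀, rho N r₀ < rho N x) := by
  have hN1 : 1 ≤ N := le_trans (by norm_num) hN
  have hlt : r₀ ^ 2 < (N:ℝ) - 1 := by
    by_contra hcon
    push_neg at hcon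
    exact no_crit_ge hN hr hcon hD
  have hE : 0 < EE N r₀ := by
    rw [EE_at_crit hD]
    rw [neg_pos]
    exact mul_neg_of_pos_of_neg (rho_pos hN1 hr) (gd_neg hr hlt)
  -- DD > 0 just to the right
  obtain ⟨u, hu, hposu⟩ : ∃ u, r₀ < u ∧ ∀ x ∈ Set.Ioo r₀ u, 0 < DD N x := by
    have hev := ev_pos_right (DD_hasDerivAt hN1 hr) hD hE
    rw [eventually_iff_exists_mem] at hev
    obtain ⟨s, hs, hprop⟩ := hev
    rw [mem_nhdsGT_iff_exists_Ioo_subset] at hs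
    obtain ⟨u, hu, hsub⟩ := hs
    exact ⟨u, hu, fun x hx => hprop x (hsub hx)⟩
  -- DD < 0 just to the left
  obtain ⟨l, hl, hnegl⟩ : ∃ l, l < r₀ ∧ ∀ x ∈ Set.Ioo l r₀, DD N x < 0 := by
    have hev := ev_neg_left (DD_hasDerivAt hN1 hr) hD hE
    rw [eventually_iff_exists_mem] at hev
    obtain ⟨s, hs, hprop⟩ := hev
    rw [mem_nhdsLT_iff_exists_Ioo_subset] at hs
    obtain ⟨l, hl, hsub⟩ := hs
    exact ⟨l, hl, fun x hx => hprop x (hsub hx)⟩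
  set ε := min (min (u - r₀) (r₀ - l)) r₀ with hεdef
  have hε0 : 0 < ε := lt_min (lt_min (by linarith) (by linarith)) hr
  have hεr₀ : ε ≤ r₀ := min_le_right _ _
  have hεu : ε ≤ u - r₀ := le_trans (min_le_left _ _) (min_le_left _ _)
  have hεl : ε ≤ r₀ - l := le_trans (min_le_left _ _) (min_le_right _ _)
  refine ⟨ε, hε0, hεr₀, ?_, ?_⟩
  · intro x hx
    have hxu : x < u := by linarith [hx.2]
    have hmono : StrictMonoOn (rho N) (Set.Ico r₀ u) := by
      apply strictMonoOn_of_deriv_pos (convex_Ico _ _)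
      · intro z hz
        exact (rho_contAt hN1 (hr.trans_le hz.1)).continuousWithinAt
      · intro z hz
        rw [interior_Ico] at hz
        rw [(rho_hasDerivAt hN1 (hr.trans hz.1)).deriv]
        exact hposu z hz
    exact hmono (Set.left_mem_Ico.2 hu) ⟨hx.1.le, hxu⟩ hx.1
  · intro x hx
    have hanti : StrictAntiOn (rho N) (Set.Ioc (r₀ - ε) r₀) := by
      apply strictAntiOn_of_deriv_neg (convex_Ioc _ _)
      · intro z hz
        have hz0 : 0 < z := by
          have := hz.1
          linarith
        exact (rho_contAt hN1 hz0).continuousWithinAt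
      · intro z hz
        rw [interior_Ioc] at hz
        have hz0 : 0 < z := by
          have := hz.1
          linarith
        rw [(rho_hasDerivAt hN1 hz0).deriv]
        exact hnegl z ⟨by linarith [hz.1], hz.2⟩
    exact hanti ⟨hx.1, hx.2.le⟩ (Set.right_mem_Ioc.2 (by linarith)) hx.2

/-- `ρ_N` attains its minimum on `(0, +∞)` at a unique point `T > 0`, where it is
positive; moreover `ρ_N` has no point of positive local maximum in `(0, +∞)`. -/
theorem rho_min (N : ℕ) (hN : 2 ≤ N) :
    (∃! T : ℝ, 0 < T ∧ ∀ r : ℝ, 0 < r → rho N T ≤ rho N r) ∧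
    (∀ T : ℝ, 0 < T → (∀ r : ℝ, 0 < r → rho N T ≤ rho N r) → 0 < rho N T) ∧
    (∀ r : ℝ, 0 < r → 0 < rho N r → ¬ IsLocalMaxOn (rho N) (Set.Ioi 0) r) := by
  have hN1 : 1 ≤ N := le_trans (by norm_num) hN
  -- a global minimum on (0,∞) is a critical point
  have hcrit : ∀ {x : ℝ}, 0 < x → IsLocalMin (rho N) x → DD N x = 0 := by
    intro x hx h
    exact h.hasDerivAt_eq_zero (rho_hasDerivAt hN1 hx)
  have hloc : ∀ {x : ℝ}, 0 < x → (∀ r : ℝ, 0 < r → rho N x ≤ rho N r) →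
      IsLocalMin (rho N) x := by
    intro x hx hmin
    filter_upwards [Ioi_mem_nhds hx] with y hy
    exact hmin y hy
  -- two distinct global minima are impossible
  have key : ∀ a b : ℝ, 0 < a → a < b → (∀ r : ℝ, 0 < r → rho N a ≤ rho N r) →
      (∀ r : ℝ, 0 < r → rho N b ≤ rho N r) → False := by
    intro a b ha hab hmina hminb
    have hb : 0 < b := ha.trans hab
    have hDa : DD N a = 0 := hcrit ha (hloc ha hmina)
    have hDb : DD N b = 0 := hcrit hb (hloc hb hminb)
    have hrab : rho N a = rho N b := le_antisymm (hmina b hb) (hminb a ha)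
    obtain ⟨ε, hε0, hεa, hright, _⟩ := crit_strict_local_min hN ha hDa
    set x₀ := min (a + ε/2) ((a+b)/2) with hx₀def
    have hx₀1 : a < x₀ := lt_min (by linarith) (by linarith)
    have hx₀2 : x₀ < a + ε := lt_of_le_of_lt (min_le_left _ _) (by linarith)
    have hx₀3 : x₀ < b := lt_of_le_of_lt (min_le_right _ _) (by linarith)
    have hx₀rho : rho N a < rho N x₀ := hright x₀ ⟨hx₀1, hx₀2⟩
    obtain ⟨m, hm, hmax⟩ := isCompact_Icc.exists_isMaxOn (Set.nonempty_Icc.2 hab.le)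
      (fun z hz => (rho_contAt hN1 (ha.trans_le hz.1)).continuousWithinAt)
    have hm0 : 0 < m := ha.trans_le hm.1
    have hx₀m : rho N x₀ ≤ rho N m := hmax ⟨hx₀1.le, hx₀3.le⟩
    have hma : a < m := by
      rcases eq_or_lt_of_le hm.1 with h | h
      · exfalso; rw [← h] at hx₀m; linarith
      · exact h
    have hmb : m < b := by
      rcases eq_or_lt_of_le hm.2 with h | h
      · exfalso; rw [h] at hx₀m; rw [hrab] at hx₀rho; linarith
      · exact h
    have hlm : IsLocalMax (rho N) m := hmax.isLocalMax (Icc_mem_nhds hma hmb)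
    have hDm : DD N m = 0 := hlm.hasDerivAt_eq_zero (rho_hasDerivAt hN1 hm0)
    obtain ⟨ε', hε'0, _, hright', _⟩ := crit_strict_local_min hN hm0 hDm
    set y₀ := min (m + ε'/2) ((m+b)/2) with hy₀def
    have hy₀1 : m < y₀ := lt_min (by linarith) (by linarith)
    have hy₀2 : y₀ < m + ε' := lt_of_le_of_lt (min_le_left _ _) (by linarith)
    have hy₀3 : y₀ < b := lt_of_le_of_lt (min_le_right _ _) (by linarith)
    have h1 : rho N m < rho N y₀ := hright' y₀ ⟨hy₀1, hy₀2⟩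
    have h2 : rho N y₀ ≤ rho N m := hmax ⟨(hma.trans hy₀1).le, hy₀3.le⟩
    linarith
  obtain ⟨T, hT0, hTmin⟩ := exists_min hN
  refine ⟨⟨T, ⟨hT0, hTmin⟩, ?_⟩, ?_, ?_⟩
  · rintro y ⟨hy0, hymin⟩
    by_contra hne
    rcases lt_or_gt_of_ne hne with h | h
    · exact key y T hy0 h hymin hTmin
    · exact key T y hT0 h hTmin hymin
  · intro T' hT' _
    exact rho_pos hN1 hT'
  · intro r₀ hr₀ _ hmax
    have hnn : nhdsWithin r₀ (Set.Ioi 0) = nhds r₀ := nhdsWithin_eq_nhds.2 (Ioi_mem_nhds hr₀)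
    have hmax' : IsLocalMax (rho N) r₀ := by
      have h' : IsMaxFilter (rho N) (nhdsWithin r₀ (Set.Ioi 0)) r₀ := hmax
      rwa [hnn] at h'
    have hD : DD N r₀ = 0 := hmax'.hasDerivAt_eq_zero (rho_hasDerivAt hN1 hr₀)
    obtain ⟨ε, hε0, _, hright, _⟩ := crit_strict_local_min hN hr₀ hD
    have hev1 : ∀ᶠ y in nhdsWithin r₀ (Set.Ioi r₀), rho N y ≤ rho N r₀ :=
      hmax'.filter_mono nhdsWithin_le_nhds
    have hev2 : ∀ᶠ y in nhdsWithin r₀ (Set.Ioi r₀), rho N r₀ < rho N y := by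
      filter_upwards [Ioo_mem_nhdsGT_of_mem (Set.left_mem_Ico.2 (by linarith : r₀ < r₀ + ε))]
        with y hy
      exact hright y hy
    obtain ⟨y, hy1, hy2⟩ := (hev1.and hev2).exists
    linarith
end
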